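/- (Quantitative form of Corollary 2.9.) Under the propagator setup and the solution setup with T = ∞, assume additionally: ‖V(t)u(t)‖ is differentiable in t on [0,∞); ‖U(t)‖ → 0 as t → ∞; 0 < ∫₀^∞ α(ξ) dξ < ∞; there is c > 0 with ‖V(t)‖·‖U(t)‖ ≤ c for all t ≥ 0. Then J := ∫₀^∞ α(ξ)·‖V(ξ)‖·‖U(ξ)‖^p dξ < ∞; and if moreover J > 0, β(t) ≤ α(t)·‖U(t)‖^p·(1/2)^p·((p−1)·J)^{−p/(p−1)} for all t ≥ 0, and 0 < ‖u₀‖ < (1/2)·((p−1)·J)^{−1/(p−1)}, then u(t) → 0 as t → ∞. -/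

import Mathlib

open MeasureTheory Filter
open scoped ENNReal

private lemma add_rpow_le_aux {x y p : ℝ} (hx : 0 ≤ x) (hy : 0 ≤ y) (hp : 1 ≤ p) :
    x ^ p + y ^ p ≤ (x + y) ^ p := by
  lift x to NNReal using hx
  lift y to NNReal using hy
  exact_mod_cast NNReal.add_rpow_le_rpow_add x y hp

theorem stmt7
    {X : Type*} [NormedAddCommGroup X] [NormedSpace ℝ X] [CompleteSpace X]
    (B U V : ℝ → X →L[ℝ] X)
    (hB : Continuous B)
    (hU0 : U 0 = 1) (hV0 : V 0 = 1)
    (hVU : ∀ t, 0 ≤ t → (V t).comp (U t) = 1)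
    (hUV : ∀ t, 0 ≤ t → (U t).comp (V t) = 1)
    (hUd : ∀ t, 0 ≤ t → HasDerivAt U ((B t).comp (U t)) t)
    (hVd : ∀ t, 0 ≤ t → HasDerivAt V (-((V t).comp (B t))) t)
    (p : ℝ) (hp : 1 < p)
    (α β : ℝ → ℝ) (hαc : Continuous α) (hβc : Continuous β)
    (hα0 : ∀ t, 0 ≤ α t) (hβ0 : ∀ t, 0 ≤ β t)
    (u G f : ℝ → X) (u₀ : X) (hu0 : u 0 = u₀)
    (hGc : ContinuousOn G (Set.Ici 0))
    (hfc : ContinuousOn f (Set.Ici 0))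
    (hud : ∀ t, 0 ≤ t → HasDerivAt u (B t (u t) + G t + f t) t)
    (hGb : ∀ t, 0 ≤ t → ‖G t‖ ≤ α t * ‖u t‖ ^ p)
    (hfb : ∀ t, 0 ≤ t → ‖f t‖ ≤ β t)
    (hVud : ∀ t, 0 ≤ t → DifferentiableAt ℝ (fun s => ‖V s (u s)‖) t)
    (hUlim : Tendsto (fun t => ‖U t‖) atTop (nhds 0))
    (hαint : IntegrableOn α (Set.Ioi (0:ℝ)))
    (hαpos : 0 < ∫ ξ in Set.Ioi (0:ℝ), α ξ)
    (c : ℝ) (hc : 0 < c)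
    (hVUc : ∀ t, 0 ≤ t → ‖V t‖ * ‖U t‖ ≤ c) :
    IntegrableOn (fun ξ => α ξ * ‖V ξ‖ * ‖U ξ‖ ^ p) (Set.Ioi (0:ℝ)) ∧
    ∀ J : ℝ, J = (∫ ξ in Set.Ioi (0:ℝ), α ξ * ‖V ξ‖ * ‖U ξ‖ ^ p) → 0 < J →
      (∀ t, 0 ≤ t →
        β t ≤ α t * ‖U t‖ ^ p * (1 / 2 : ℝ) ^ p * ((p - 1) * J) ^ (-(p / (p - 1)))) →
      0 < ‖u₀‖ → ‖u₀‖ < (1 / 2) * ((p - 1) * J) ^ (-(1 / (p - 1))) →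
      Tendsto u atTop (nhds 0) := by
  have hp0 : (0:ℝ) < p := lt_trans one_pos hp
  have hp1 : (0:ℝ) < p - 1 := by linarith
  -- continuity facts
  have hUc : ∀ t : ℝ, 0 ≤ t → ContinuousAt U t := fun t ht => (hUd t ht).continuousAt
  have hVc : ∀ t : ℝ, 0 ≤ t → ContinuousAt V t := fun t ht => (hVd t ht).continuousAt
  have huc : ∀ t : ℝ, 0 ≤ t → ContinuousAt u t := fun t ht => (hud t ht).continuousAt
  have hUcon : ContinuousOn U (Set.Ici 0) := fun t ht => (hUc t ht).continuousWithinAt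
  have hVcon : ContinuousOn V (Set.Ici 0) := fun t ht => (hVc t ht).continuousWithinAt
  set g : ℝ → ℝ := fun ξ => α ξ * ‖V ξ‖ * ‖U ξ‖ ^ p with hgdef
  have hg0 : ∀ ξ, 0 ≤ g ξ := fun ξ =>
    mul_nonneg (mul_nonneg (hα0 ξ) (norm_nonneg _)) (Real.rpow_nonneg (norm_nonneg _) p)
  -- bound on ‖U‖
  obtain ⟨T, hT⟩ : ∃ T : ℝ, ∀ t ≥ T, ‖U t‖ ≤ 1 :=
    eventually_atTop.mp (hUlim.eventually (eventually_le_nhds one_pos))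
  obtain ⟨C, hC⟩ := (isCompact_Icc : IsCompact (Set.Icc (0:ℝ) (max T 0))).exists_bound_of_continuousOn
    (hUcon.mono (Set.Icc_subset_Ici_self))
  set M₀ : ℝ := max C 1 with hM₀def
  have hM₀pos : (0:ℝ) < M₀ := lt_of_lt_of_le one_pos (le_max_right _ _)
  have hM₀ : ∀ t : ℝ, 0 ≤ t → ‖U t‖ ≤ M₀ := by
    intro t ht
    rcases le_or_gt t (max T 0) with h | h
    · exact le_trans (hC t ⟨ht, h⟩) (le_max_left _ _)
    · exact le_trans (hT t (le_trans (le_max_left _ _) h.le)) (le_max_right _ _)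
  have hgcon : ContinuousOn g (Set.Ici 0) :=
    (hαc.continuousOn.mul hVcon.norm).mul
      (hUcon.norm.rpow_const (fun t _ => Or.inr hp0.le))
  have hgint : IntegrableOn g (Set.Ioi 0) := by
    have hmeas : AEStronglyMeasurable g (volume.restrict (Set.Ioi (0:ℝ))) :=
      (hgcon.mono Set.Ioi_subset_Ici_self).aestronglyMeasurable measurableSet_Ioi
    apply Integrable.mono' (hαint.const_mul (c * M₀ ^ (p-1))) hmeas
    filter_upwards [ae_restrict_mem measurableSet_Ioi] with ξ hξ
    have hξ0 : (0:ℝ) ≤ ξ := le_of_lt hξ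
    rw [Real.norm_of_nonneg (hg0 ξ)]
    by_cases hU : ‖U ξ‖ = 0
    · show α ξ * ‖V ξ‖ * ‖U ξ‖ ^ p ≤ _
      rw [hU, Real.zero_rpow (ne_of_gt hp0), mul_zero]
      have h5 : (0:ℝ) ≤ M₀ ^ (p-1) := Real.rpow_nonneg hM₀pos.le _
      exact mul_nonneg (mul_nonneg hc.le h5) (hα0 ξ)
    · have hUpos : 0 < ‖U ξ‖ := lt_of_le_of_ne (norm_nonneg _) (Ne.symm hU)
      have e : ‖U ξ‖ ^ p = ‖U ξ‖ * ‖U ξ‖ ^ (p-1) := by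
        have := Real.rpow_add hUpos 1 (p-1)
        rw [show (1:ℝ) + (p-1) = p by ring, Real.rpow_one] at this
        exact this
      show α ξ * ‖V ξ‖ * ‖U ξ‖ ^ p ≤ _
      calc α ξ * ‖V ξ‖ * ‖U ξ‖ ^ p = (‖V ξ‖ * ‖U ξ‖) * ‖U ξ‖ ^ (p-1) * α ξ := by rw [e]; ring
        _ ≤ c * M₀ ^ (p-1) * α ξ := by
            have h1 : ‖V ξ‖ * ‖U ξ‖ ≤ c := hVUc ξ hξ0
            have h2 : ‖U ξ‖ ^ (p-1) ≤ M₀ ^ (p-1) :=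
              Real.rpow_le_rpow (norm_nonneg _) (hM₀ ξ hξ0) hp1.le
            have h3 : (0:ℝ) ≤ ‖V ξ‖ * ‖U ξ‖ := by positivity
            have h4 : (0:ℝ) ≤ ‖U ξ‖ ^ (p-1) := Real.rpow_nonneg (norm_nonneg _) _
            exact mul_le_mul_of_nonneg_right
              (mul_le_mul h1 h2 h4 hc.le) (hα0 ξ)
  refine ⟨hgint, ?_⟩
  intro J hJ hJpos hβb hu₀pos hu₀lt
  have hpJ : 0 < (p-1)*J := mul_pos hp1 hJpos
  set b : ℝ := ((p-1)*J) ^ (-(1/(p-1))) with hbdef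
  have hbpos : 0 < b := Real.rpow_pos_of_pos hpJ _
  set a : ℝ := b / 2 with hadef
  have hapos : 0 < a := by positivity
  have hu₀a : ‖u₀‖ < a := by rw [hadef]; linarith [hu₀lt]
  -- rpow identities
  have hb1p : b ^ (1-p) = (p-1)*J := by
    rw [hbdef, ← Real.rpow_mul hpJ.le, show (-(1/(p-1))) * (1-p) = 1 by field_simp; ring,
      Real.rpow_one]
  have hap : a ^ p = (1/2:ℝ) ^ p * ((p-1)*J) ^ (-(p/(p-1))) := by
    have ha2 : a = (1/2 : ℝ) * b := by rw [hadef]; ring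
    rw [ha2, Real.mul_rpow (by norm_num) hbpos.le, hbdef, ← Real.rpow_mul hpJ.le]
    congr 2
    field_simp
  -- the functions w, φ
  set w : ℝ → X := fun t => V t (u t) with hwdef
  set φ : ℝ → ℝ := fun t => ‖w t‖ with hφdef
  have hw0 : w 0 = u₀ := by simp [hwdef, hu0, hV0]
  have hφ0 : ∀ t, 0 ≤ φ t := fun t => norm_nonneg _
  have hwd : ∀ t, 0 ≤ t → HasDerivAt w (V t (G t + f t)) t := by
    intro t ht
    have h1 := (hVd t ht).clm_apply (hud t ht)
    have heq : (-((V t).comp (B t))) (u t) + (V t) (B t (u t) + G t + f t)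
        = V t (G t + f t) := by
      simp only [ContinuousLinearMap.neg_apply, ContinuousLinearMap.comp_apply, map_add]
      abel
    exact heq ▸ h1
  have hwcont : ∀ t, 0 ≤ t → ContinuousAt w t := fun t ht => (hwd t ht).continuousAt
  have hφcont : ∀ t : ℝ, 0 ≤ t → ContinuousAt φ t := fun t ht => (hwcont t ht).norm
  have huw : ∀ t, 0 ≤ t → u t = U t (w t) := by
    intro t ht
    have h1 : (U t).comp (V t) (u t) = u t := by rw [hUV t ht]; simp
    simpa [ContinuousLinearMap.comp_apply, hwdef] using h1.symm
  have hub : ∀ t, 0 ≤ t → ‖u t‖ ≤ ‖U t‖ * φ t := by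
    intro t ht
    rw [huw t ht]
    exact (U t).le_opNorm _
  -- the function h
  set h : ℝ → ℝ := fun ξ => g ξ * φ ξ ^ p + ‖V ξ‖ * β ξ with hhdef
  have hh0 : ∀ ξ, 0 ≤ h ξ := fun ξ =>
    add_nonneg (mul_nonneg (hg0 ξ) (Real.rpow_nonneg (hφ0 ξ) p))
      (mul_nonneg (norm_nonneg _) (hβ0 ξ))
  have hhcont : ∀ t : ℝ, 0 ≤ t → ContinuousAt h t := by
    intro t ht
    have h1 : ContinuousAt g t :=
      (hαc.continuousAt.mul (hVc t ht).norm).mul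
        ((hUc t ht).norm.rpow_const (Or.inr hp0.le))
    exact (h1.mul ((hφcont t ht).rpow_const (Or.inr hp0.le))).add
      (((hVc t ht).norm).mul hβc.continuousAt)
  have hh2cont : Continuous (fun ξ : ℝ => h (max ξ 0)) := by
    rw [continuous_iff_continuousAt]
    intro ξ
    have hmax : ContinuousAt (fun ξ : ℝ => max ξ 0) ξ :=
      (continuous_id.max continuous_const).continuousAt
    exact ContinuousAt.comp (f := fun ξ : ℝ => max ξ 0) (hhcont _ (le_max_right ξ 0)) hmax
  have hg2cont : Continuous (fun ξ : ℝ => g (max ξ 0)) := by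
    rw [continuous_iff_continuousAt]
    intro ξ
    have h1 : ContinuousAt g (max ξ 0) :=
      (hαc.continuousAt.mul (hVc _ (le_max_right _ _)).norm).mul
        ((hUc _ (le_max_right _ _)).norm.rpow_const (Or.inr hp0.le))
    have hmax : ContinuousAt (fun ξ : ℝ => max ξ 0) ξ :=
      (continuous_id.max continuous_const).continuousAt
    exact ContinuousAt.comp (f := fun ξ : ℝ => max ξ 0) h1 hmax
  -- F
  set F : ℝ → ℝ := fun t => ‖u₀‖ + ∫ s in (0:ℝ)..t, h (max s 0) with hFdef
  have hFd : ∀ t : ℝ, HasDerivAt F (h (max t 0)) t := by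
    intro t
    exact (intervalIntegral.integral_hasDerivAt_right
      (hh2cont.intervalIntegrable _ _)
      (hh2cont.stronglyMeasurableAtFilter _ _) hh2cont.continuousAt).const_add _
  have hFcont : Continuous F := by
    rw [continuous_iff_continuousAt]; exact fun t => (hFd t).continuousAt
  have hFeq : ∀ t : ℝ, 0 ≤ t →
      (∫ s in (0:ℝ)..t, h (max s 0)) = ∫ s in (0:ℝ)..t, h s := by
    intro t ht
    apply intervalIntegral.integral_congr
    intro s hs
    rw [Set.uIcc_of_le ht] at hs
    simp [max_eq_left hs.1]
  have hF0 : F 0 = ‖u₀‖ := by simp [hFdef]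
  have hFlb : ∀ t : ℝ, 0 ≤ t → ‖u₀‖ ≤ F t := by
    intro t ht
    have : 0 ≤ ∫ s in (0:ℝ)..t, h (max s 0) :=
      intervalIntegral.integral_nonneg ht (fun s _ => hh0 _)
    show ‖u₀‖ ≤ ‖u₀‖ + ∫ s in (0:ℝ)..t, h (max s 0)
    linarith
  have hFpos : ∀ t : ℝ, 0 ≤ t → 0 < F t := fun t ht => lt_of_lt_of_le hu₀pos (hFlb t ht)
  -- φ ≤ F
  have hw'con : ContinuousOn (fun ξ => V ξ (G ξ + f ξ)) (Set.Ici 0) :=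
    hVcon.clm_apply (hGc.add hfc)
  have hhconOn : ContinuousOn h (Set.Ici 0) := fun s hs => (hhcont s hs).continuousWithinAt
  have hφF : ∀ t : ℝ, 0 ≤ t → φ t ≤ F t := by
    intro t ht
    have hsub : Set.uIcc (0:ℝ) t ⊆ Set.Ici 0 := by
      rw [Set.uIcc_of_le ht]; exact Set.Icc_subset_Ici_self
    have hww : (∫ s in (0:ℝ)..t, V s (G s + f s)) = w t - w 0 := by
      apply intervalIntegral.integral_eq_sub_of_hasDerivAt
      · intro x hx
        rw [Set.uIcc_of_le ht] at hx
        exact hwd x hx.1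
      · exact (hw'con.mono hsub).intervalIntegrable
    have hint1 : IntervalIntegrable (fun s => ‖V s (G s + f s)‖) volume 0 t :=
      ((hw'con.mono hsub).norm).intervalIntegrable
    have hint2 : IntervalIntegrable h volume 0 t := (hhconOn.mono hsub).intervalIntegrable
    have hptw : ∀ s ∈ Set.Icc (0:ℝ) t, ‖V s (G s + f s)‖ ≤ h s := by
      intro s hs
      obtain ⟨hs0, _⟩ := hs
      have e1 : ‖u s‖ ^ p ≤ ‖U s‖ ^ p * φ s ^ p := by
        rw [← Real.mul_rpow (norm_nonneg _) (hφ0 s)]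
        exact Real.rpow_le_rpow (norm_nonneg _) (hub s hs0) hp0.le
      calc ‖V s (G s + f s)‖ ≤ ‖V s‖ * ‖G s + f s‖ := (V s).le_opNorm _
        _ ≤ ‖V s‖ * (‖G s‖ + ‖f s‖) :=
            mul_le_mul_of_nonneg_left (norm_add_le _ _) (norm_nonneg _)
        _ ≤ ‖V s‖ * (α s * ‖u s‖ ^ p + β s) := by
            have := hGb s hs0; have := hfb s hs0
            have : ‖G s‖ + ‖f s‖ ≤ α s * ‖u s‖ ^ p + β s := by
              linarith [hGb s hs0, hfb s hs0]
            exact mul_le_mul_of_nonneg_left this (norm_nonneg _)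
        _ ≤ ‖V s‖ * (α s * (‖U s‖ ^ p * φ s ^ p) + β s) := by
            have h2 : α s * ‖u s‖ ^ p ≤ α s * (‖U s‖ ^ p * φ s ^ p) :=
              mul_le_mul_of_nonneg_left e1 (hα0 s)
            have : α s * ‖u s‖ ^ p + β s ≤ α s * (‖U s‖ ^ p * φ s ^ p) + β s := by linarith
            exact mul_le_mul_of_nonneg_left this (norm_nonneg _)
        _ = g s * φ s ^ p + ‖V s‖ * β s := by rw [hgdef]; ring
        _ = h s := rfl
    calc φ t = ‖w 0 + (w t - w 0)‖ := by rw [add_sub_cancel]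
      _ ≤ ‖w 0‖ + ‖w t - w 0‖ := norm_add_le _ _
      _ = ‖u₀‖ + ‖∫ s in (0:ℝ)..t, V s (G s + f s)‖ := by rw [hww, hw0]
      _ ≤ ‖u₀‖ + ∫ s in (0:ℝ)..t, ‖V s (G s + f s)‖ := by
          have := intervalIntegral.norm_integral_le_integral_norm
            (f := fun s => V s (G s + f s)) (μ := volume) ht
          linarith
      _ ≤ ‖u₀‖ + ∫ s in (0:ℝ)..t, h s := by
          have := intervalIntegral.integral_mono_on ht hint1 hint2 hptw
          linarith
      _ = F t := by rw [hFdef]; simp only []; rw [hFeq t ht]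
  -- bound ‖V‖β ≤ g a^p
  have hVβ : ∀ s : ℝ, 0 ≤ s → ‖V s‖ * β s ≤ g s * a ^ p := by
    intro s hs
    calc ‖V s‖ * β s
        ≤ ‖V s‖ * (α s * ‖U s‖ ^ p * (1/2:ℝ) ^ p * ((p-1)*J) ^ (-(p/(p-1)))) :=
          mul_le_mul_of_nonneg_left (hβb s hs) (norm_nonneg _)
      _ = g s * a ^ p := by rw [hap, hgdef]; ring
  -- key differential inequality
  have hkey : ∀ s : ℝ, 0 ≤ s → h s ≤ g s * (F s + a) ^ p := by
    intro s hs
    have h1 : φ s ^ p ≤ F s ^ p := Real.rpow_le_rpow (hφ0 s) (hφF s hs) hp0.le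
    have h2 : F s ^ p + a ^ p ≤ (F s + a) ^ p :=
      add_rpow_le_aux (hFpos s hs).le hapos.le hp.le
    calc h s = g s * φ s ^ p + ‖V s‖ * β s := rfl
      _ ≤ g s * F s ^ p + g s * a ^ p :=
          add_le_add (mul_le_mul_of_nonneg_left h1 (hg0 s)) (hVβ s hs)
      _ = g s * (F s ^ p + a ^ p) := by ring
      _ ≤ g s * (F s + a) ^ p := mul_le_mul_of_nonneg_left h2 (hg0 s)
  -- Γ
  set Γ : ℝ → ℝ := fun t => ∫ s in (0:ℝ)..t, g (max s 0) with hΓdef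
  have hΓd : ∀ t : ℝ, HasDerivAt Γ (g (max t 0)) t := by
    intro t
    exact intervalIntegral.integral_hasDerivAt_right
      (hg2cont.intervalIntegrable _ _)
      (hg2cont.stronglyMeasurableAtFilter _ _) hg2cont.continuousAt
  have hΓcont : Continuous Γ := by
    rw [continuous_iff_continuousAt]; exact fun t => (hΓd t).continuousAt
  have hΓ0 : Γ 0 = 0 := by simp [hΓdef]
  have hΓle : ∀ t : ℝ, 0 ≤ t → Γ t ≤ J := by
    intro t ht
    have e1 : Γ t = ∫ s in (0:ℝ)..t, g s := by
      apply intervalIntegral.integral_congr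
      intro s hs
      rw [Set.uIcc_of_le ht] at hs
      simp [max_eq_left hs.1]
    rw [e1, intervalIntegral.integral_of_le ht, hJ]
    apply setIntegral_mono_set hgint
    · exact Filter.Eventually.of_forall hg0
    · exact (Set.Ioc_subset_Ioi_self).eventuallyLE
  -- E
  set E : ℝ → ℝ := fun t => (F t + a) ^ (1-p) + (p-1) * Γ t with hEdef
  have hEcont : ContinuousOn E (Set.Ici 0) := by
    apply ContinuousOn.add
    · intro t ht
      exact ((hFcont.continuousAt.add continuousAt_const).rpow_const
        (Or.inl (ne_of_gt (by have := hFpos t ht; linarith : (0:ℝ) < F t + a)))).continuousWithinAt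
    · exact (continuous_const.mul hΓcont).continuousOn
  have hEderiv : ∀ t ∈ Set.Ioi (0:ℝ),
      HasDerivAt E (h (max t 0) * (1-p) * (F t + a) ^ (1-p-1) + (p-1) * g (max t 0)) t := by
    intro t ht
    have hFa : F t + a ≠ 0 := by
      have := hFpos t (le_of_lt ht); positivity
    exact (((hFd t).add_const a).rpow_const (Or.inl hFa)).add ((hΓd t).const_mul (p-1))
  have hEmono : MonotoneOn E (Set.Ici 0) := by
    apply monotoneOn_of_deriv_nonneg (convex_Ici 0) hEcont
    · rw [interior_Ici]
      intro t ht
      exact (hEderiv t ht).differentiableAt.differentiableWithinAt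
    · rw [interior_Ici]
      intro t ht
      rw [(hEderiv t ht).deriv]
      have ht0 : (0:ℝ) ≤ t := le_of_lt ht
      rw [max_eq_left ht0]
      have hFa : 0 < F t + a := by have := hFpos t ht0; positivity
      have hpow : 0 < (F t + a) ^ p := Real.rpow_pos_of_pos hFa p
      have h3 : h t * (F t + a) ^ (-p) ≤ g t := by
        rw [Real.rpow_neg hFa.le, mul_inv_le_iff₀' hpow]
        exact (hkey t ht0).trans_eq (mul_comm _ _)
      have e2 : h t * (1-p) * (F t + a) ^ (1-p-1)
          = -((p-1) * (h t * (F t + a) ^ (-p))) := by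
        rw [show (1-p-1 : ℝ) = -p by ring]; ring
      rw [e2]
      have h4 : (p-1) * (h t * (F t + a) ^ (-p)) ≤ (p-1) * g t :=
        mul_le_mul_of_nonneg_left h3 hp1.le
      linarith
  -- conclude boundedness
  set δ : ℝ := (‖u₀‖ + a) ^ (1-p) - (p-1)*J with hδdef
  have hδpos : 0 < δ := by
    have h1 : ‖u₀‖ + a < b := by
      have : a = b / 2 := hadef
      linarith [hu₀a]
    have h2 : b ^ (1-p) < (‖u₀‖ + a) ^ (1-p) :=
      Real.rpow_lt_rpow_of_neg (by positivity) h1 (by linarith)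
    rw [hδdef, ← hb1p]
    linarith
  set M : ℝ := δ ^ (-(1/(p-1))) with hMdef
  have hbound : ∀ t : ℝ, 0 ≤ t → F t + a ≤ M := by
    intro t ht
    have h1 : E 0 ≤ E t := hEmono Set.self_mem_Ici ht ht
    have hE0 : E 0 = (‖u₀‖ + a) ^ (1-p) := by
      rw [hEdef]; simp only []; rw [hF0, hΓ0, mul_zero, add_zero]
    have h2 : δ ≤ (F t + a) ^ (1-p) := by
      have h5 : (p-1) * Γ t ≤ (p-1) * J := mul_le_mul_of_nonneg_left (hΓle t ht) hp1.le
      have h6 : (‖u₀‖ + a) ^ (1-p) ≤ (F t + a) ^ (1-p) + (p-1) * Γ t := by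
        rw [← hE0]; exact h1
      rw [hδdef]; linarith
    have hFa : 0 < F t + a := by have := hFpos t ht; positivity
    have h3 : ((F t + a) ^ (1-p)) ^ (-(1/(p-1))) ≤ δ ^ (-(1/(p-1))) :=
      Real.rpow_le_rpow_of_nonpos hδpos h2 (by
        have : 0 < 1/(p-1) := by positivity
        linarith)
    calc F t + a = ((F t + a) ^ (1-p)) ^ (-(1/(p-1))) := by
          rw [← Real.rpow_mul hFa.le, show (1-p) * (-(1/(p-1))) = 1 by field_simp; ring,
            Real.rpow_one]
      _ ≤ M := h3
  -- finish
  have hulim : Tendsto (fun t => ‖u t‖) atTop (nhds 0) := by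
    apply squeeze_zero' (Filter.Eventually.of_forall fun t => norm_nonneg _)
      (g := fun t => ‖U t‖ * M)
    · filter_upwards [eventually_ge_atTop (0:ℝ)] with t ht
      calc ‖u t‖ ≤ ‖U t‖ * φ t := hub t ht
        _ ≤ ‖U t‖ * M := by
            apply mul_le_mul_of_nonneg_left _ (norm_nonneg _)
            have := hφF t ht
            have := hbound t ht
            linarith
    · have := hUlim.mul_const M
      simpa using this
  exact tendsto_zero_iff_norm_tendsto_zero.mpr hulim
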